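/- Let L = (V, R, S, τ, d, n) be an L-system of size ℓ that generates the full coded level, i.e., it generates w = τ(L_d) with n = |L_d|. Then there exists a context-free grammar (in the smallest-grammar sense) of size at most (d+1)·ℓ generating w. -/

import Mathlib

/-- The homomorphic extension of a morphism `R : V → V⁺` to strings. -/
def morphApply {V : Type} (R : V → List V) (w : List V) : List V := w.flatMap R

/-- An L-system `(V, R, S, τ, d, n)`: a rule per symbol, an axiom, a coding `τ`,
a level `d` where to stop, and the length `n` of the string to generate. -/
structure LSystem (V Γ : Type) where
  R : V → List V
  ax : List V
  coding : V → Γ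
  d : ℕ
  n : ℕ

/-- The levels of an L-system: `L_0 = S` and `L_{i+1} = R(L_i)`. -/
def LSystem.level {V Γ : Type} (L : LSystem V Γ) (i : ℕ) : List V :=
  (morphApply L.R)^[i] L.ax

/-- Well-formedness: nonempty axiom and nonempty right-hand sides. -/
def LSystem.WF {V Γ : Type} (L : LSystem V Γ) : Prop :=
  L.ax ≠ [] ∧ ∀ A, L.R A ≠ []

/-- The size of an L-system: `|S| + Σ_{A ∈ V} |R(A)|`. -/
def LSystem.size {V Γ : Type} [Fintype V] (L : LSystem V Γ) : ℕ :=
  L.ax.length + ∑ A, (L.R A).length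

/-- The L-system generates `w = τ(L_d[1,n])`, the coding applied to the
length-`n` prefix of level `d`. -/
def LGenerates {V Γ : Type} (L : LSystem V Γ) (w : List Γ) : Prop :=
  w = ((L.level L.d).take L.n).map L.coding

/-- `ℓ(w)`: the size of the smallest L-system generating `w`. -/
noncomputable def lMeasure {Γ : Type} (w : List Γ) : ℕ :=
  sInf { s | ∃ v, ∃ L : LSystem (Fin v) Γ, L.WF ∧ LGenerates L w ∧ L.size = s }

/-- A context-free grammar (in the smallest-grammar sense) over the terminal
alphabet `T`: nonterminals `X_0, …, X_{r-1}`, one rule per nonterminal whose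
right-hand side is a list of terminals (`Sum.inl`) and nonterminals
(`Sum.inr`). -/
structure CFG (T : Type) where
  r : ℕ
  rules : Fin r → List (T ⊕ Fin r)

/-- Well-formedness: each rule mentions only strictly earlier nonterminals. -/
def CFG.WF {T : Type} (G : CFG T) : Prop :=
  ∀ k, ∀ s ∈ G.rules k, ∀ j, s = Sum.inr j → (j : ℕ) < (k : ℕ)

/-- The size of a grammar: total length of the right-hand sides. -/
def CFG.size {T : Type} (G : CFG T) : ℕ := ∑ k, (G.rules k).length

/-- The grammar generates `w`: the expansion function (terminals expand to
themselves, a nonterminal to the concatenation of the expansions of its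
rule's symbols) maps the last nonterminal to `w`. -/
def CFGGenerates {T : Type} (G : CFG T) (w : List T) : Prop :=
  ∃ e : Fin G.r → List T,
    (∀ k, e k = (G.rules k).flatMap (Sum.elim (fun a => [a]) e)) ∧
    ∃ h : 0 < G.r, e ⟨G.r - 1, Nat.sub_lt h Nat.one_pos⟩ = w

/-- `g(w)`: the size of the smallest context-free grammar generating `w`. -/
noncomputable def gMeasure {T : Type} (w : List T) : ℕ :=
  sInf { s | ∃ G : CFG T, G.WF ∧ CFGGenerates G w ∧ G.size = s }

private lemma card_pos_of_lt {c m k : ℕ} (hk : k < m * c) : 0 < c := by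
  rcases Nat.eq_zero_or_pos c with h | h
  · subst h; simp at hk
  · exact h

private lemma mid_lt {c k b : ℕ} (hc : 0 < c) (hck : c ≤ k) (hb : b < c) :
    b + c * (k / c - 1) < k := by
  have h1 : 1 ≤ k / c := (Nat.one_le_div_iff hc).mpr hck
  have h2 : c * (k / c - 1) + c = c * (k / c) := by
    rw [← Nat.mul_succ]
    congr 1
    omega
  have h3 : c * (k / c) ≤ k := Nat.mul_div_le k c
  omega

private lemma iter_flatMap {V : Type} (R : V → List V) :
    ∀ (i : ℕ) (xs : List V),
    (morphApply R)^[i] xs = xs.flatMap (fun B => (morphApply R)^[i] [B])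
  | 0, xs => by simp
  | (i+1), xs => by
    rw [Function.iterate_succ_apply]
    show (morphApply R)^[i] (xs.flatMap R) = _
    rw [iter_flatMap R i (xs.flatMap R), List.flatMap_assoc]
    congr 1; funext A
    rw [← iter_flatMap R i (R A), Function.iterate_succ_apply]
    congr 1
    simp [morphApply]

private noncomputable def Gr {V Γ : Type} [Fintype V] (L : LSystem V Γ) : CFG Γ where
  r := (L.d + 1) * Fintype.card V + 1
  rules k :=
    if hk : (k : ℕ) < (L.d + 1) * Fintype.card V then
      if hk0 : (k : ℕ) < Fintype.card V then
        [Sum.inl (L.coding ((Fintype.equivFin V).symm ⟨(k : ℕ), hk0⟩))]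
      else
        (L.R ((Fintype.equivFin V).symm ⟨(k : ℕ) % Fintype.card V,
            Nat.mod_lt _ (card_pos_of_lt hk)⟩)).map
          (fun B => Sum.inr ⟨(Fintype.equivFin V B : ℕ)
              + Fintype.card V * ((k : ℕ) / Fintype.card V - 1),
            by
              have := mid_lt (card_pos_of_lt hk) (not_lt.mp hk0) (Fintype.equivFin V B).isLt
                (k := (k : ℕ))
              omega⟩)
    else
      L.ax.map (fun A => Sum.inr ⟨(Fintype.equivFin V A : ℕ) + Fintype.card V * L.d,
        by have h := (Fintype.equivFin V A).isLt
           have : (L.d + 1) * Fintype.card V = Fintype.card V * L.d + Fintype.card V := by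
             ring
           omega⟩)

private noncomputable def ee {V Γ : Type} [Fintype V] (L : LSystem V Γ)
    (k : Fin ((L.d + 1) * Fintype.card V + 1)) : List Γ :=
  if hk : (k : ℕ) < (L.d + 1) * Fintype.card V then
    (((morphApply L.R)^[(k : ℕ) / Fintype.card V])
      [(Fintype.equivFin V).symm ⟨(k : ℕ) % Fintype.card V,
        Nat.mod_lt _ (card_pos_of_lt hk)⟩]).map L.coding
  else (L.level L.d).map L.coding


private lemma ee_eval {V Γ : Type} [Fintype V] (L : LSystem V Γ) (i : ℕ) (B : V)
    (h : (Fintype.equivFin V B : ℕ) + Fintype.card V * i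
        < (L.d + 1) * Fintype.card V + 1)
    (h2 : (Fintype.equivFin V B : ℕ) + Fintype.card V * i
        < (L.d + 1) * Fintype.card V) :
    ee L ⟨(Fintype.equivFin V B : ℕ) + Fintype.card V * i, h⟩
      = ((morphApply L.R)^[i] [B]).map L.coding := by
  have hc : 0 < Fintype.card V := Fintype.card_pos_iff.mpr ⟨B⟩
  have hb := (Fintype.equivFin V B).isLt
  rw [ee, dif_pos h2]
  have harg : ∀ (p : ((⟨(Fintype.equivFin V B : ℕ) + Fintype.card V * i, h⟩ :
      Fin ((L.d + 1) * Fintype.card V + 1)) : ℕ) % Fintype.card V < Fintype.card V),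
      (Fintype.equivFin V).symm ⟨((⟨(Fintype.equivFin V B : ℕ) + Fintype.card V * i, h⟩ :
        Fin ((L.d + 1) * Fintype.card V + 1)) : ℕ) % Fintype.card V, p⟩ = B := by
    intro p
    have he : (⟨((⟨(Fintype.equivFin V B : ℕ) + Fintype.card V * i, h⟩ :
        Fin ((L.d + 1) * Fintype.card V + 1)) : ℕ) % Fintype.card V, p⟩ :
        Fin (Fintype.card V)) = Fintype.equivFin V B := by
      apply Fin.ext
      show ((Fintype.equivFin V B : ℕ) + Fintype.card V * i) % Fintype.card V
        = (Fintype.equivFin V B : ℕ)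
      rw [Nat.add_mul_mod_self_left, Nat.mod_eq_of_lt hb]
    rw [he, Equiv.symm_apply_apply]
  rw [harg]
  have hdiv : ((⟨(Fintype.equivFin V B : ℕ) + Fintype.card V * i, h⟩ :
      Fin ((L.d + 1) * Fintype.card V + 1)) : ℕ) / Fintype.card V = i := by
    show ((Fintype.equivFin V B : ℕ) + Fintype.card V * i) / Fintype.card V = i
    rw [Nat.add_mul_div_left _ _ hc, Nat.div_eq_of_lt hb, Nat.zero_add]
  rw [hdiv]


/-- For any L-system of size ℓ generating its full coded level d (i.e. with
n = |L_d|, generating w = τ(L_d)), there is a context-free grammar of size at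
most (d+1)·ℓ generating w. -/
theorem lsystem_to_grammar {V Γ : Type} [Fintype V]
    (L : LSystem V Γ) (hwf : L.WF) (hn : L.n = (L.level L.d).length) :
    ∃ G : CFG Γ, G.WF ∧ CFGGenerates G ((L.level L.d).map L.coding) ∧
      G.size ≤ (L.d + 1) * L.size := by
  classical
  obtain ⟨A0, -⟩ := List.exists_mem_of_ne_nil L.ax hwf.1
  have hc : 0 < Fintype.card V := Fintype.card_pos_iff.mpr ⟨A0⟩
  refine ⟨Gr L, ?_, ?_, ?_⟩
  · -- well-formedness
    intro k s hs j hj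
    simp only [Gr] at hs
    split_ifs at hs with hk hk0
    · subst hj; exact absurd (List.mem_singleton.mp hs) Sum.inr_ne_inl
    · replace hs := List.mem_map.mp hs
      obtain ⟨B, -, rfl⟩ := hs
      cases hj
      exact mid_lt (card_pos_of_lt hk) (not_lt.mp hk0) (Fintype.equivFin V B).isLt
    · replace hs := List.mem_map.mp hs
      obtain ⟨A, -, rfl⟩ := hs
      cases hj
      show (Fintype.equivFin V A : ℕ) + Fintype.card V * L.d < (k : ℕ)
      have h1 := (Fintype.equivFin V A).isLt
      have h2 : (L.d + 1) * Fintype.card V = Fintype.card V * L.d + Fintype.card V := by ring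
      have h3 : (L.d + 1) * Fintype.card V ≤ (k : ℕ) := not_lt.mp hk
      omega
  · -- generation
    refine ⟨ee L, ?_, Nat.succ_pos _, ?_⟩
    · intro (k : Fin ((L.d + 1) * Fintype.card V + 1))
      conv_lhs => rw [ee]
      simp only [Gr]
      split_ifs with hk hk0
      · -- level 0
        have hdiv : (k : ℕ) / Fintype.card V = 0 := Nat.div_eq_of_lt hk0
        have hmod : (k : ℕ) % Fintype.card V = (k : ℕ) := Nat.mod_eq_of_lt hk0
        have harg : ∀ p, ((Fintype.equivFin V).symm ⟨(k : ℕ) % Fintype.card V, p⟩)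
            = (Fintype.equivFin V).symm ⟨(k : ℕ), hk0⟩ :=
          fun p => congrArg _ (Fin.ext hmod)
        rw [hdiv, harg]
        simp
      · -- middle levels
        have hck : Fintype.card V ≤ (k : ℕ) := not_lt.mp hk0
        have h1 : 1 ≤ (k : ℕ) / Fintype.card V := (Nat.one_le_div_iff hc).mpr hck
        rw [List.flatMap_map]
        simp only [Function.comp_def, Sum.elim_inr]
        conv_lhs => rw [show (k : ℕ) / Fintype.card V
          = ((k : ℕ) / Fintype.card V - 1) + 1 from by omega]
        rw [Function.iterate_succ_apply]
        have hsingle : ∀ A : V, morphApply L.R [A] = L.R A := by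
          intro A; simp [morphApply]
        rw [hsingle, iter_flatMap, List.map_flatMap]
        congr 1
        funext B
        refine (ee_eval L ((k : ℕ) / Fintype.card V - 1) B ?_ ?_).symm
        all_goals
          have := mid_lt hc hck (Fintype.equivFin V B).isLt (k := (k : ℕ))
          have := k.isLt
          omega
      · -- start
        rw [List.flatMap_map]
        simp only [Function.comp_def, Sum.elim_inr]
        show ((morphApply L.R)^[L.d] L.ax).map L.coding = _
        rw [iter_flatMap, List.map_flatMap]
        congr 1
        funext A
        refine (ee_eval L L.d A ?_ ?_).symm
        all_goals
          have h1 := (Fintype.equivFin V A).isLt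
          have h2 : (L.d + 1) * Fintype.card V
              = Fintype.card V * L.d + Fintype.card V := by ring
          omega
    · conv_lhs => unfold ee
      rw [dif_neg]
      show ¬ ((L.d + 1) * Fintype.card V + 1 - 1 < (L.d + 1) * Fintype.card V)
      omega
  · -- size
    have hSpos : Fintype.card V ≤ ∑ A : V, (L.R A).length := by
      calc Fintype.card V = ∑ _A : V, 1 := by simp
        _ ≤ ∑ A : V, (L.R A).length :=
          Finset.sum_le_sum fun A _ => List.length_pos_iff.mpr (hwf.2 A)
    have hlast : (((Gr L).rules (Fin.last ((L.d + 1) * Fintype.card V))).length)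
        = L.ax.length := by
      simp only [Gr]
      rw [dif_neg (by simp [Fin.last])]
      rw [List.length_map]
    have heval : ∀ (i : Fin (L.d + 1)) (a : Fin (Fintype.card V)),
        (((Gr L).rules (Fin.castSucc (finProdFinEquiv (i, a)))).length)
        = if (i : ℕ) = 0 then 1 else (L.R ((Fintype.equivFin V).symm a)).length := by
      intro i a
      have hval : ((Fin.castSucc (finProdFinEquiv (i, a)) : Fin ((L.d + 1) * Fintype.card V + 1)) : ℕ)
          = (a : ℕ) + Fintype.card V * (i : ℕ) := rfl
      have hia : (a : ℕ) + Fintype.card V * (i : ℕ) < (L.d + 1) * Fintype.card V := by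
        have h1 := a.isLt
        have h2 := i.isLt
        have h3 : Fintype.card V * ((i : ℕ) + 1) ≤ Fintype.card V * (L.d + 1) :=
          Nat.mul_le_mul_left _ h2
        have h4 : (L.d + 1) * Fintype.card V = Fintype.card V * (L.d + 1) := by ring
        have h5 : Fintype.card V * ((i : ℕ) + 1)
            = Fintype.card V * (i : ℕ) + Fintype.card V := by ring
        omega
      simp only [Gr]
      rw [dif_pos (by rw [hval]; exact hia)]
      by_cases hi : (i : ℕ) = 0
      · rw [if_pos hi]
        rw [dif_pos (by rw [hval, hi]; simpa using a.isLt)]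
        rfl
      · rw [if_neg hi]
        rw [dif_neg (by
          rw [hval]
          intro hcon
          have := Nat.le_add_right (Fintype.card V * 1) ((a : ℕ))
          have h5 : Fintype.card V * 1 ≤ Fintype.card V * (i : ℕ) :=
            Nat.mul_le_mul_left _ (by omega)
          omega)]
        rw [List.length_map]
        have harg : ∀ p, ((Fintype.equivFin V).symm
            ⟨((Fin.castSucc (finProdFinEquiv (i, a)) :
              Fin ((L.d + 1) * Fintype.card V + 1)) : ℕ) % Fintype.card V, p⟩)
            = (Fintype.equivFin V).symm a := by
          intro p
          congr 1
          apply Fin.ext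
          show ((a : ℕ) + Fintype.card V * (i : ℕ)) % Fintype.card V = (a : ℕ)
          rw [Nat.add_mul_mod_self_left, Nat.mod_eq_of_lt a.isLt]
        rw [harg]
    have hsum : (Gr L).size = (∑ p : Fin (L.d + 1) × Fin (Fintype.card V),
        (((Gr L).rules (Fin.castSucc (finProdFinEquiv p))).length)) + L.ax.length := by
      show (∑ k : Fin ((L.d + 1) * Fintype.card V + 1), ((Gr L).rules k).length) = _
      rw [Fin.sum_univ_castSucc, hlast]
      rw [← Equiv.sum_comp finProdFinEquiv
        (fun k => (((Gr L).rules (Fin.castSucc k)).length))]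
    rw [hsum]
    have hmain : (∑ p : Fin (L.d + 1) × Fin (Fintype.card V),
        (((Gr L).rules (Fin.castSucc (finProdFinEquiv p))).length))
        = Fintype.card V + L.d * ∑ A : V, (L.R A).length := by
      rw [Fintype.sum_prod_type]
      have hinner : ∀ i : Fin (L.d + 1),
          (∑ a : Fin (Fintype.card V),
            (((Gr L).rules (Fin.castSucc (finProdFinEquiv (i, a)))).length))
          = if (i : ℕ) = 0 then Fintype.card V else ∑ A : V, (L.R A).length := by
        intro i
        by_cases hi : (i : ℕ) = 0
        · rw [if_pos hi]
          calc _ = ∑ _a : Fin (Fintype.card V), 1 :=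
                Finset.sum_congr rfl fun a _ => by rw [heval, if_pos hi]
            _ = Fintype.card V := by simp
        · rw [if_neg hi]
          calc _ = ∑ a : Fin (Fintype.card V),
                (L.R ((Fintype.equivFin V).symm a)).length :=
                Finset.sum_congr rfl fun a _ => by rw [heval, if_neg hi]
            _ = ∑ A : V, (L.R A).length :=
                Equiv.sum_comp (Fintype.equivFin V).symm fun A => (L.R A).length
      calc (∑ i : Fin (L.d + 1), ∑ a : Fin (Fintype.card V),
            (((Gr L).rules (Fin.castSucc (finProdFinEquiv (i, a)))).length))
          = ∑ i : Fin (L.d + 1),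
            (if (i : ℕ) = 0 then Fintype.card V else ∑ A : V, (L.R A).length) :=
            Finset.sum_congr rfl fun i _ => hinner i
        _ = Fintype.card V + ∑ i : Fin L.d,
            (if ((Fin.succ i : Fin (L.d + 1)) : ℕ) = 0 then Fintype.card V
              else ∑ A : V, (L.R A).length) := by
            rw [Fin.sum_univ_succ]
            simp
        _ = Fintype.card V + L.d * ∑ A : V, (L.R A).length := by
            congr 1
            rw [Finset.sum_congr rfl fun (i : Fin L.d) _ => by
              rw [if_neg (by simp [Fin.val_succ])]]
            simp [Finset.sum_const, mul_comm]
    rw [hmain]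
    show Fintype.card V + L.d * (∑ A : V, (L.R A).length) + L.ax.length
      ≤ (L.d + 1) * (L.ax.length + ∑ A : V, (L.R A).length)
    nlinarith [hSpos, Nat.zero_le (L.d * L.ax.length)]
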